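/- Let T(λ) = -B_0 + λI + B_1/(λ - α_1) + ... + B_m/(λ - α_m), where B_0, ..., B_m are n×n complex matrices and α_1, ..., α_m are distinct complex numbers. Let ‖·‖ be a matrix norm induced by a vector norm on ℂ^n, and let R be a positive real root of the real rational function q(x) = x - ‖B_0‖ - ‖B_1‖/(x - |α_1|) - ... - ‖B_m‖/(x - |α_m|) with |α_i| < R for all i. If λ_0 ∈ ℂ is an eigenvalue of T (i.e., λ_0 is not a pole and T(λ_0)v = 0 for some nonzero v ∈ ℂ^n), then |λ_0| ≤ R. -/

import Mathlib

/-- Upper bound for eigenvalues of the matrix rational function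
`T(λ) = -B₀ + λI + Σ Bᵢ/(λ - αᵢ)` via a positive root `R` of the associated real rational
function `q(x) = x - ‖B₀‖ - Σ ‖Bᵢ‖/(x - |αᵢ|)` with `|αᵢ| < R`.  The operator norm on
`V →L[ℂ] V` is the matrix norm induced by the (arbitrary) vector norm on `V` (e.g. `ℂⁿ`). -/
theorem stmt_2 (V : Type*) [NormedAddCommGroup V] [NormedSpace ℂ V]
    (n : ℕ) (hdim : Module.finrank ℂ V = n)
    (m : ℕ) (B0 : V →L[ℂ] V) (B : Fin m → V →L[ℂ] V)
    (α : Fin m → ℂ) (hα : Function.Injective α)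
    (R : ℝ) (hRpos : 0 < R) (hαR : ∀ i, ‖α i‖ < R)
    (hroot : R - ‖B0‖ - ∑ i, ‖B i‖ / (R - ‖α i‖) = 0)
    (lam0 : ℂ) (hpole : ∀ i, lam0 ≠ α i) (v : V) (hv : v ≠ 0)
    (heig : (-B0 + lam0 • (1 : V →L[ℂ] V) + ∑ i, (lam0 - α i)⁻¹ • B i) v = 0) :
    ‖lam0‖ ≤ R := by
  by_contra hcon
  push_neg at hcon
  set t := ‖lam0‖ with ht
  have hv' : (0 : ℝ) < ‖v‖ := norm_pos_iff.mpr hv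
  -- rewrite the eigenvalue equation
  have h2 : lam0 • v = B0 v - ∑ i, (lam0 - α i)⁻¹ • (B i v) := by
    have h := heig
    simp only [ContinuousLinearMap.add_apply, ContinuousLinearMap.neg_apply,
      ContinuousLinearMap.smul_apply, ContinuousLinearMap.one_apply,
      ContinuousLinearMap.sum_apply] at h
    rw [eq_sub_iff_add_eq]
    have := eq_of_sub_eq_zero (sub_eq_zero.mpr h.symm)
    -- h : -B0 v + lam0 • v + ∑ i, (lam0 - α i)⁻¹ • (B i v) = 0
    linear_combination (norm := abel) h
  -- bound each term
  have hterm : ∀ i : Fin m, ‖(lam0 - α i)⁻¹ • (B i v)‖ ≤ ‖B i‖ / (R - ‖α i‖) * ‖v‖ := by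
    intro i
    have hRi : (0 : ℝ) < R - ‖α i‖ := by linarith [hαR i]
    have hlow : R - ‖α i‖ ≤ ‖lam0 - α i‖ := by
      have h := norm_sub_norm_le lam0 (α i)
      linarith
    rw [norm_smul]
    have h1 : ‖(lam0 - α i)⁻¹‖ ≤ (R - ‖α i‖)⁻¹ := by
      rw [norm_inv]
      exact inv_anti₀ hRi hlow
    calc ‖(lam0 - α i)⁻¹‖ * ‖B i v‖ ≤ (R - ‖α i‖)⁻¹ * (‖B i‖ * ‖v‖) := by
          exact mul_le_mul h1 ((B i).le_opNorm v) (norm_nonneg _) (by positivity)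
      _ = ‖B i‖ / (R - ‖α i‖) * ‖v‖ := by ring
  have hmain : t * ‖v‖ ≤ ‖B0‖ * ‖v‖ + (∑ i, ‖B i‖ / (R - ‖α i‖)) * ‖v‖ := by
    have : t * ‖v‖ = ‖lam0 • v‖ := by rw [norm_smul]
    rw [this, h2]
    calc ‖B0 v - ∑ i, (lam0 - α i)⁻¹ • (B i v)‖
        ≤ ‖B0 v‖ + ‖∑ i, (lam0 - α i)⁻¹ • (B i v)‖ := norm_sub_le _ _
      _ ≤ ‖B0‖ * ‖v‖ + ∑ i, ‖(lam0 - α i)⁻¹ • (B i v)‖ :=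
          add_le_add (B0.le_opNorm v) (norm_sum_le _ _)
      _ ≤ ‖B0‖ * ‖v‖ + ∑ i, ‖B i‖ / (R - ‖α i‖) * ‖v‖ :=
          add_le_add_right (Finset.sum_le_sum fun i _ => hterm i) _
      _ = ‖B0‖ * ‖v‖ + (∑ i, ‖B i‖ / (R - ‖α i‖)) * ‖v‖ := by
          rw [Finset.sum_mul]
  have hR : ‖B0‖ + ∑ i, ‖B i‖ / (R - ‖α i‖) = R := by linarith
  have : t ≤ R := by
    nlinarith [hmain, hv']
  linarith
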